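/- Let σ be a two-qubit Bell-diagonal state with eigenvalues λ_{00} = 1 − 2Q + λ_{11}, λ_{01} = λ_{10} = Q − λ_{11}, for a parameter λ_{11} ∈ [0, Q] with 0 ≤ Q ≤ 1/2. Then the function λ_{11} ↦ S(X|E) (Eve's conditional von Neumann entropy on Alice's measurement outcome, with E purifying σ) attains its minimum at λ_{11} = Q², and the minimum value equals 1 − h(Q), where h is the binary entropy. -/
import Mathlib


/-- Binary entropy (in bits), `h(x) = −x log₂ x − (1−x) log₂ (1−x)`. -/
noncomputable def binEnt (x : ℝ) : ℝ := -(x * Real.logb 2 x) - (1 - x) * Real.logb 2 (1 - x)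

/-- Shannon entropy (in bits) of a four-outcome distribution. -/
noncomputable def ent4 (a b c d : ℝ) : ℝ :=
  -(a * Real.logb 2 a) - b * Real.logb 2 b - c * Real.logb 2 c - d * Real.logb 2 d

/-- Eve's conditional von Neumann entropy `S(X|E) = S(ρ_{XE}) − S(ρ_E)` for the BB84
Bell-diagonal family with eigenvalues `λ₀₀ = 1−2Q+λ₁₁`, `λ₀₁ = λ₁₀ = Q−λ₁₁`, `λ₁₁ = t`,
where `E` purifies `σ` and `X` is Alice's computational-basis outcome.  For this family
`S(ρ_{XE}) = 1 + h(Q)` and `S(ρ_E) = S(σ)` is the Shannon entropy of the eigenvalues. -/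
noncomputable def SXgivenE (Q t : ℝ) : ℝ :=
  1 + binEnt Q - ent4 (1 - 2 * Q + t) (Q - t) (Q - t) t

lemma gibbs_term {p q : ℝ} (hp : 0 ≤ p) (hq : 0 < q) :
    p * Real.log q - p * Real.log p ≤ q - p := by
  rcases eq_or_lt_of_le hp with h | h
  · simp [← h]
    linarith
  · have h1 : Real.log (q / p) ≤ q / p - 1 := Real.log_le_sub_one_of_pos (by positivity)
    have h2 : Real.log (q / p) = Real.log q - Real.log p := Real.log_div hq.ne' h.ne'
    calc p * Real.log q - p * Real.log p = p * (Real.log (q / p)) := by rw [h2]; ring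
      _ ≤ p * (q / p - 1) := mul_le_mul_of_nonneg_left h1 h.le
      _ = q - p := by field_simp

lemma ent4_val {Q : ℝ} (hQ0 : 0 < Q) (hQ1 : Q < 1) :
    ent4 (1 - 2 * Q + Q ^ 2) (Q - Q ^ 2) (Q - Q ^ 2) (Q ^ 2) = 2 * binEnt Q := by
  have hne : Q ≠ 0 := hQ0.ne'
  have hne1 : (1 : ℝ) - Q ≠ 0 := by linarith
  have e1 : (1 : ℝ) - 2 * Q + Q ^ 2 = (1 - Q) ^ 2 := by ring
  have e2 : Q - Q ^ 2 = Q * (1 - Q) := by ring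
  have l1 : Real.logb 2 ((1 - Q) ^ 2) = 2 * Real.logb 2 (1 - Q) := by
    rw [Real.logb_pow]; norm_num
  have l2 : Real.logb 2 (Q * (1 - Q)) = Real.logb 2 Q + Real.logb 2 (1 - Q) :=
    Real.logb_mul hne hne1
  have l4 : Real.logb 2 (Q ^ 2) = 2 * Real.logb 2 Q := by
    rw [Real.logb_pow]; norm_num
  rw [ent4, binEnt, e1, e2, l1, l2, l4]; ring

lemma ent4_le {Q t : ℝ} (hQ0 : 0 < Q) (hQhalf : Q ≤ 1 / 2) (ht0 : 0 ≤ t) (htQ : t ≤ Q) :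
    ent4 (1 - 2 * Q + t) (Q - t) (Q - t) t ≤ 2 * binEnt Q := by
  have hQ1 : Q < 1 := by linarith
  have hne : Q ≠ 0 := hQ0.ne'
  have h1Q : (0 : ℝ) < 1 - Q := by linarith
  set x := Real.log Q with hx
  set y := Real.log (1 - Q) with hy
  have hp1 : (0 : ℝ) ≤ 1 - 2 * Q + t := by linarith
  have hp2 : (0 : ℝ) ≤ Q - t := by linarith
  have g1 := gibbs_term hp1 (show (0:ℝ) < (1 - Q) ^ 2 by positivity)
  have g2 := gibbs_term hp2 (show (0:ℝ) < Q * (1 - Q) by positivity)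
  have g4 := gibbs_term ht0 (show (0:ℝ) < Q ^ 2 by positivity)
  have l1 : Real.log ((1 - Q) ^ 2) = 2 * y := by rw [hy, Real.log_pow]; norm_num
  have l2 : Real.log (Q * (1 - Q)) = x + y := Real.log_mul hne h1Q.ne'
  have l4 : Real.log (Q ^ 2) = 2 * x := by rw [hx, Real.log_pow]; norm_num
  rw [l1] at g1; rw [l2] at g2; rw [l4] at g4
  -- key inequality on natural-log entropies
  have key : 2 * Q * x + 2 * (1 - Q) * y ≤
      (1 - 2 * Q + t) * Real.log (1 - 2 * Q + t) + 2 * ((Q - t) * Real.log (Q - t))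
        + t * Real.log t := by nlinarith [g1, g2, g4]
  have hL : (0 : ℝ) < Real.log 2 := Real.log_pos (by norm_num)
  have eA : ent4 (1 - 2 * Q + t) (Q - t) (Q - t) t =
      (-((1 - 2 * Q + t) * Real.log (1 - 2 * Q + t) + 2 * ((Q - t) * Real.log (Q - t))
        + t * Real.log t)) / Real.log 2 := by
    simp only [ent4, Real.logb]; ring
  have eB : 2 * binEnt Q = (-(2 * Q * x + 2 * (1 - Q) * y)) / Real.log 2 := by
    simp only [binEnt, Real.logb, hx, hy]; ring
  rw [eA, eB]
  rw [div_le_div_iff₀ hL hL]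
  nlinarith [key, hL]

/-- BB84 single-photon collective-attack optimization: on `λ₁₁ = t ∈ [0, Q]` the function
`t ↦ S(X|E)` attains its minimum at `t = Q²`, and the minimum value is `1 − h(Q)`. -/
theorem bb84_one_photon_min_uncertainty (Q : ℝ) (hQ0 : 0 ≤ Q) (hQ : Q ≤ 1 / 2) :
    (∀ t ∈ Set.Icc (0 : ℝ) Q, SXgivenE Q (Q ^ 2) ≤ SXgivenE Q t) ∧
    Q ^ 2 ∈ Set.Icc (0 : ℝ) Q ∧
    SXgivenE Q (Q ^ 2) = 1 - binEnt Q := by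
  rcases eq_or_lt_of_le hQ0 with h0 | h0
  · -- Q = 0
    subst h0
    refine ⟨?_, by norm_num, by norm_num [SXgivenE, binEnt, ent4]⟩
    intro t ht
    have ht0 : t = 0 := le_antisymm ht.2 ht.1
    subst ht0
    norm_num
  · have hQ1 : Q < 1 := by linarith
    have hval : SXgivenE Q (Q ^ 2) = 1 - binEnt Q := by
      rw [SXgivenE, ent4_val h0 hQ1]; ring
    refine ⟨?_, ⟨by positivity, by nlinarith⟩, hval⟩
    intro t ht
    rw [hval, SXgivenE]
    have := ent4_le h0 hQ ht.1 ht.2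
    linarith
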